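/- Let 0 < p₂ < p₁ ≤ ∞, N ∈ ℕ, and k ∈ ℕ with 1 ≤ k ≤ N. Then a_k(id : ℓ_{p₁}^N → ℓ_{p₂}^N) = (N − k + 1)^{1/p₂ − 1/p₁}, where 1/∞ is interpreted as 0. -/

import Mathlib

open scoped ENNReal

open Finset in
/-- Every subspace of dimension at least `m` contains a vector of sup-norm at most one
with at least `m` coordinates of modulus one. -/
lemma exists_good_vector {N m : ℕ} (E : Submodule ℝ (Fin N → ℝ))
    (hm : m ≤ Module.finrank ℝ E) :
    ∃ x ∈ E, (∀ i, |x i| ≤ 1) ∧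
      m ≤ (Finset.univ.filter (fun i => |x i| = 1)).card := by
  classical
  set F : Set ℕ := {n | ∃ x ∈ E, (∀ i, |x i| ≤ 1) ∧
      n = (Finset.univ.filter (fun i => |x i| = 1)).card} with hF
  have hF0 : (0 : ℕ) ∈ F := by
    refine ⟨0, E.zero_mem, fun i => by simp, ?_⟩
    symm
    rw [Finset.card_eq_zero, Finset.filter_eq_empty_iff]
    intro i _
    simp
  have hFb : BddAbove F := by
    refine ⟨N, fun n hn => ?_⟩
    obtain ⟨x, -, -, rfl⟩ := hn
    simpa using (Finset.card_filter_le Finset.univ (fun i => |x i| = 1))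
  have hmem := Nat.sSup_mem ⟨0, hF0⟩ hFb
  set n₀ := sSup F with hn₀
  obtain ⟨x, hxE, hx1, hcard⟩ := hmem
  by_cases hge : m ≤ n₀
  · exact ⟨x, hxE, hx1, hcard ▸ hge⟩
  exfalso
  push_neg at hge
  set S : Finset (Fin N) := Finset.univ.filter (fun i => |x i| = 1) with hS
  -- find y ∈ E, y ≠ 0, vanishing on S
  have hyex : ∃ y : Fin N → ℝ, y ∈ E ∧ y ≠ 0 ∧ ∀ i ∈ S, y i = 0 := by
    set φ : E →ₗ[ℝ] ({i // i ∈ S} → ℝ) :=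
      { toFun := fun v i => (v : Fin N → ℝ) i
        map_add' := by intros; rfl
        map_smul' := by intros; rfl } with hφ
    have hni : ¬ Function.Injective φ := by
      intro hinj
      have := LinearMap.finrank_le_finrank_of_injective hinj
      rw [Module.finrank_fintype_fun_eq_card, Fintype.card_coe] at this
      omega
    rw [← LinearMap.ker_eq_bot, Submodule.eq_bot_iff] at hni
    push_neg at hni
    obtain ⟨v, hv, hv0⟩ := hni
    refine ⟨(v : Fin N → ℝ), v.2, ?_, ?_⟩
    · exact fun h => hv0 ((Submodule.coe_eq_zero).mp h)
    · intro i hi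
      have := LinearMap.mem_ker.mp hv
      exact congrFun this ⟨i, hi⟩
  obtain ⟨y, hyE, hy0, hyS⟩ := hyex
  set s : Finset (Fin N) := Finset.univ.filter (fun i => y i ≠ 0) with hs
  have hsne : s.Nonempty := by
    rcases Function.ne_iff.mp hy0 with ⟨i, hi⟩
    simp only [Pi.zero_apply] at hi
    exact ⟨i, by simp [hs, hi]⟩
  -- coords where y ≠ 0 are not in S, hence |x i| < 1
  have hnotS : ∀ i ∈ s, |x i| < 1 := by
    intro i hi
    have hyi : y i ≠ 0 := by simpa [hs] using hi
    have : i ∉ S := fun h => hyi (hyS i h)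
    have : |x i| ≠ 1 := by simpa [hS] using this
    exact lt_of_le_of_ne (hx1 i) this
  set t : Fin N → ℝ := fun i => if 0 < y i then (1 - x i) / y i else (1 + x i) / (-(y i)) with ht
  have htpos : ∀ i ∈ s, 0 < t i := by
    intro i hi
    have hyi : y i ≠ 0 := by simpa [hs] using hi
    have hxi := hnotS i hi
    rw [abs_lt] at hxi
    by_cases h : 0 < y i
    · simp only [ht, if_pos h]
      exact div_pos (by linarith) h
    · simp only [ht, if_neg h]
      have : y i < 0 := lt_of_le_of_ne (not_lt.mp h) hyi
      exact div_pos (by linarith) (by linarith)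
  set T : ℝ := s.inf' hsne t with hT
  have hTpos : 0 < T := (Finset.lt_inf'_iff hsne).mpr htpos
  set x' : Fin N → ℝ := x + T • y with hx'
  have hx'E : x' ∈ E := E.add_mem hxE (E.smul_mem T hyE)
  -- bound on each coordinate
  have key : ∀ i ∈ s, |x' i| ≤ 1 ∧ (T = t i → |x' i| = 1) := by
    intro i hi
    have hyi : y i ≠ 0 := by simpa [hs] using hi
    have hxi := hnotS i hi
    rw [abs_lt] at hxi
    have hTle : T ≤ t i := Finset.inf'_le _ hi
    have hx'i : x' i = x i + T * y i := by simp [hx', smul_eq_mul]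
    by_cases h : 0 < y i
    · have hti : t i = (1 - x i) / y i := by simp [ht, h]
      have h1 : x i + T * y i ≤ 1 := by
        have : T * y i ≤ t i * y i := mul_le_mul_of_nonneg_right hTle h.le
        rw [hti, div_mul_cancel₀ _ (ne_of_gt h)] at this
        linarith
      have h2 : -1 ≤ x i + T * y i := by nlinarith
      constructor
      · rw [hx'i, abs_le]; exact ⟨h2, h1⟩
      · intro hTt
        rw [hx'i, hTt, hti, div_mul_cancel₀ _ (ne_of_gt h)]
        rw [show x i + (1 - x i) = 1 by ring, abs_one]
    · have hyneg : y i < 0 := lt_of_le_of_ne (not_lt.mp h) hyi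
      have hti : t i = (1 + x i) / (-(y i)) := by simp [ht, h]
      have h1 : -1 ≤ x i + T * y i := by
        have : t i * (-(y i)) ≥ T * (-(y i)) :=
          mul_le_mul_of_nonneg_right hTle (by linarith)
        rw [hti, div_mul_cancel₀ _ (by linarith : -(y i) ≠ 0)] at this
        nlinarith
      have h2 : x i + T * y i ≤ 1 := by nlinarith
      constructor
      · rw [hx'i, abs_le]; exact ⟨h1, h2⟩
      · intro hTt
        have hy' : -(y i) ≠ 0 := by linarith
        have hTy : T * y i = -(1 + x i) := by
          calc T * y i = (1 + x i) / (-(y i)) * y i := by rw [hTt, hti]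
            _ = -((1 + x i) / (-(y i)) * (-(y i))) := by ring
            _ = -(1 + x i) := by rw [div_mul_cancel₀ _ hy']
        have : x' i = -1 := by rw [hx'i, hTy]; ring
        rw [this, abs_neg, abs_one]
  have hx'1 : ∀ i, |x' i| ≤ 1 := by
    intro i
    by_cases hi : i ∈ s
    · exact (key i hi).1
    · have hyi : y i = 0 := by simpa [hs] using hi
      have : x' i = x i := by
        simp only [hx', Pi.add_apply, Pi.smul_apply, smul_eq_mul, hyi, mul_zero, add_zero]
      rw [this]; exact hx1 i
  obtain ⟨i₀, hi₀s, hi₀⟩ := Finset.exists_mem_eq_inf' hsne t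
  have hx'i₀ : |x' i₀| = 1 := (key i₀ hi₀s).2 hi₀
  have hSsub : S ⊆ Finset.univ.filter (fun i => |x' i| = 1) := by
    intro i hi
    have hyi : y i = 0 := hyS i hi
    have : x' i = x i := by
      simp only [hx', Pi.add_apply, Pi.smul_apply, smul_eq_mul, hyi, mul_zero, add_zero]
    simp only [Finset.mem_filter, Finset.mem_univ, true_and, this]
    simpa [hS] using hi
  have hi₀S : i₀ ∉ S := by
    intro h
    have hyi : y i₀ ≠ 0 := by simpa [hs] using hi₀s
    exact hyi (hyS i₀ h)
  have hsub : insert i₀ S ⊆ Finset.univ.filter (fun i => |x' i| = 1) := by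
    refine Finset.insert_subset ?_ hSsub
    simp [hx'i₀]
  have hbig : n₀ + 1 ≤ (Finset.univ.filter (fun i => |x' i| = 1)).card := by
    calc n₀ + 1 = (insert i₀ S).card := by
          rw [Finset.card_insert_of_notMem hi₀S, hcard]
      _ ≤ _ := Finset.card_le_card hsub
  have : (Finset.univ.filter (fun i => |x' i| = 1)).card ∈ F :=
    ⟨x', hx'E, hx'1, rfl⟩
  have := le_csSup hFb this
  omega

/-- The `ℓ_p` (quasi-)norm on `ℝ^N`. -/
noncomputable def lpnorm (p : ℝ≥0∞) {N : ℕ} (x : Fin N → ℝ) : ℝ :=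
  if p = ∞ then ⨆ i, |x i| else (∑ i, |x i| ^ p.toReal) ^ (1 / p.toReal)

/-- The `k`-th approximation number of the identity map `id : ℓ_{p₁}^N → ℓ_{p₂}^N`. -/
noncomputable def approxNumId (p₁ p₂ : ℝ≥0∞) (N k : ℕ) : ℝ :=
  sInf {r : ℝ | ∃ A : (Fin N → ℝ) →ₗ[ℝ] (Fin N → ℝ),
    Module.rank ℝ (LinearMap.range A) < k ∧
    r = sSup {c : ℝ | ∃ x : Fin N → ℝ, lpnorm p₁ x ≤ 1 ∧ c = lpnorm p₂ (x - A x)}}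

lemma lpnorm_nonneg (p : ℝ≥0∞) {N : ℕ} (x : Fin N → ℝ) : 0 ≤ lpnorm p x := by
  unfold lpnorm
  split
  · exact Real.iSup_nonneg fun i => abs_nonneg _
  · exact Real.rpow_nonneg (Finset.sum_nonneg fun i _ =>
      Real.rpow_nonneg (abs_nonneg _) _) _

lemma abs_le_lpnorm {p : ℝ≥0∞} (hp : 0 < p) {N : ℕ} (x : Fin N → ℝ) (i : Fin N) :
    |x i| ≤ lpnorm p x := by
  unfold lpnorm
  split_ifs with h
  · exact le_ciSup (f := fun i => |x i|) (Set.Finite.bddAbove (Set.finite_range _)) i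
  · have hq : 0 < p.toReal := ENNReal.toReal_pos hp.ne' h
    have h1 : (|x i| ^ p.toReal) ^ (1 / p.toReal) = |x i| := by
      rw [← Real.rpow_mul (abs_nonneg _), mul_one_div, div_self hq.ne', Real.rpow_one]
    rw [← h1]
    refine Real.rpow_le_rpow (Real.rpow_nonneg (abs_nonneg _) _) ?_ (by positivity)
    exact Finset.single_le_sum (fun i _ => Real.rpow_nonneg (abs_nonneg _) _)
      (Finset.mem_univ i)

lemma lpnorm_smul {p : ℝ≥0∞} (hp : p ≠ ∞) (hq : 0 < p.toReal) {N : ℕ}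
    (c : ℝ) (hc : 0 ≤ c) (x : Fin N → ℝ) :
    lpnorm p (c • x) = c * lpnorm p x := by
  unfold lpnorm
  rw [if_neg hp, if_neg hp]
  have : ∀ i, |(c • x) i| ^ p.toReal = c ^ p.toReal * |x i| ^ p.toReal := by
    intro i
    rw [Pi.smul_apply, smul_eq_mul, abs_mul, abs_of_nonneg hc,
      Real.mul_rpow hc (abs_nonneg _)]
  rw [Finset.sum_congr rfl fun i _ => this i, ← Finset.mul_sum,
    Real.mul_rpow (Real.rpow_nonneg hc _)
      (Finset.sum_nonneg fun i _ => Real.rpow_nonneg (abs_nonneg _) _),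
    ← Real.rpow_mul hc, mul_one_div, div_self hq.ne', Real.rpow_one]

open Finset in
/-- A Hölder-type inequality between power sums. -/
lemma sum_rpow_card_bound {ι : Type*} (s : Finset ι) (f : ι → ℝ)
    (hf : ∀ i, 0 ≤ f i) {a b : ℝ} (ha : 0 < a) (hab : a < b) :
    (∑ i ∈ s, f i ^ a) ^ (1/a) ≤
      (s.card : ℝ) ^ (1/a - 1/b) * (∑ i ∈ s, f i ^ b) ^ (1/b) := by
  have hb : 0 < b := ha.trans hab
  rcases s.eq_empty_or_nonempty with rfl | hne
  · have he : (1:ℝ)/a - 1/b ≠ 0 :=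
      ne_of_gt (sub_pos.mpr (one_div_lt_one_div_of_lt ha hab))
    simp only [Finset.sum_empty, Finset.card_empty, Nat.cast_zero]
    rw [Real.zero_rpow (by positivity : (1:ℝ)/a ≠ 0),
      Real.zero_rpow (by positivity : (1:ℝ)/b ≠ 0), Real.zero_rpow he, mul_zero]
  have hM : (0:ℝ) < s.card := by exact_mod_cast Finset.card_pos.mpr hne
  set M : ℝ := (s.card : ℝ) with hMdef
  have hw' : ∑ _i ∈ s, M⁻¹ = 1 := by
    rw [Finset.sum_const, nsmul_eq_mul]
    field_simp
    exact hMdef.symm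
  have key := Real.arith_mean_le_rpow_mean s (fun _ => M⁻¹) (fun i => f i ^ a)
    (fun i _ => by positivity) hw' (fun i _ => Real.rpow_nonneg (hf i) _)
    (by rw [le_div_iff₀ ha]; linarith : 1 ≤ b / a)
  have hzb : ∀ i ∈ s, (f i ^ a) ^ (b/a) = f i ^ b := by
    intro i _
    rw [← Real.rpow_mul (hf i), mul_div_cancel₀ _ ha.ne']
  rw [← Finset.mul_sum, ← Finset.mul_sum] at key
  rw [Finset.sum_congr rfl hzb] at key
  set Za := ∑ i ∈ s, f i ^ a with hZa
  set Zb := ∑ i ∈ s, f i ^ b with hZb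
  have hZa0 : 0 ≤ Za := Finset.sum_nonneg fun i _ => Real.rpow_nonneg (hf i) _
  have hZb0 : 0 ≤ Zb := Finset.sum_nonneg fun i _ => Real.rpow_nonneg (hf i) _
  have h1 : Za ≤ M ^ (1 - a/b) * Zb ^ (a/b) := by
    have : 1 / (b/a) = a/b := by field_simp
    rw [this] at key
    have := mul_le_mul_of_nonneg_left key (le_of_lt hM)
    rw [← mul_assoc, mul_inv_cancel₀ hM.ne', one_mul] at this
    refine this.trans (le_of_eq ?_)
    rw [Real.mul_rpow (by positivity) hZb0, Real.inv_rpow hM.le,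
      Real.rpow_sub hM, Real.rpow_one]
    ring
  calc Za ^ (1/a) ≤ (M ^ (1 - a/b) * Zb ^ (a/b)) ^ (1/a) :=
        Real.rpow_le_rpow hZa0 h1 (by positivity)
    _ = M ^ (1/a - 1/b) * Zb ^ (1/b) := by
        have e1 : (1 - a/b) * (1/a) = 1/a - 1/b := by
          field_simp
        have e2 : (a/b) * (1/a) = 1/b := by
          rw [div_mul_div_comm, mul_one, div_eq_div_iff (by positivity : (0:ℝ) < b*a).ne' hb.ne']
          ring
        rw [Real.mul_rpow (Real.rpow_nonneg hM.le _) (Real.rpow_nonneg hZb0 _),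
          ← Real.rpow_mul hM.le, ← Real.rpow_mul hZb0, e1, e2]

/-- The coordinate projection onto the first `j` coordinates, as a linear map. -/
noncomputable def projKm (N j : ℕ) : (Fin N → ℝ) →ₗ[ℝ] (Fin N → ℝ) where
  toFun x := fun i => if (i : ℕ) < j then x i else 0
  map_add' x y := by funext i; by_cases h : (i:ℕ) < j <;> simp [h]
  map_smul' c x := by funext i; by_cases h : (i:ℕ) < j <;> simp [h]

open Finset in
lemma projKm_rank_lt {N j k : ℕ} (hjk : j < k) :
    Module.rank ℝ (LinearMap.range (projKm N j)) < k := by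
  classical
  set g : Fin N → (Fin N → ℝ) := fun i => Pi.single i (1:ℝ) with hgdef
  set t : Finset (Fin N) := Finset.univ.filter (fun i => (i:ℕ) < j) with htdef
  have hrange : LinearMap.range (projKm N j) ≤
      Submodule.span ℝ (g '' (t : Set (Fin N))) := by
    rintro - ⟨x, rfl⟩
    have hx : projKm N j x = ∑ i ∈ t, x i • g i := by
      funext i'
      rw [Finset.sum_apply]
      by_cases h : (i':ℕ) < j
      · rw [Finset.sum_eq_single i']
        · simp [projKm, h, hgdef, Pi.single_apply, Pi.smul_apply, smul_eq_mul]
        · intro b _ hb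
          simp [hgdef, Pi.single_apply, Pi.smul_apply, smul_eq_mul, hb.symm]
        · intro hmem
          exact absurd (by simp [htdef, h]) hmem
      · have : ∀ b ∈ t, (x b • g b) i' = 0 := by
          intro b hb
          have hbj : (b:ℕ) < j := by simpa [htdef] using hb
          have : b ≠ i' := by rintro rfl; exact h hbj
          simp [hgdef, Pi.single_apply, Pi.smul_apply, smul_eq_mul, this]
        rw [Finset.sum_eq_zero this]
        simp [projKm, h]
    rw [hx]
    exact Submodule.sum_mem _ fun i hi => Submodule.smul_mem _ _
      (Submodule.subset_span ⟨i, by simpa using hi, rfl⟩)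
  have hcard : t.card ≤ j := by
    have := Finset.card_le_card_of_injOn (f := fun i : Fin N => (i:ℕ))
      (s := t) (t := Finset.range j)
      (fun i hi => Finset.mem_range.mpr (by simpa [htdef] using hi))
      (fun i _ i' _ h => Fin.val_injective h)
    simpa using this
  calc Module.rank ℝ (LinearMap.range (projKm N j))
      ≤ Module.rank ℝ (Submodule.span ℝ (g '' (t : Set (Fin N)))) :=
        Submodule.rank_mono hrange
    _ ≤ Cardinal.mk (g '' (t : Set (Fin N))) := rank_span_le _
    _ ≤ Cardinal.mk (t : Set (Fin N)) := Cardinal.mk_image_le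
    _ = (t.card : Cardinal) := by simp [Cardinal.mk_coe_finset]
    _ ≤ (j : Cardinal) := by exact_mod_cast hcard
    _ < (k : Cardinal) := by exact_mod_cast hjk

open Finset in
lemma bddAbove_T {p₁ p₂ : ℝ≥0∞} (hp₁ : 0 < p₁) (hp₂ : p₂ ≠ ∞) (hq₂ : 0 < p₂.toReal)
    {N : ℕ} (A : (Fin N → ℝ) →ₗ[ℝ] (Fin N → ℝ)) :
    BddAbove {c : ℝ | ∃ x : Fin N → ℝ, lpnorm p₁ x ≤ 1 ∧ c = lpnorm p₂ (x - A x)} := by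
  classical
  set q₂ := p₂.toReal
  set g : Fin N → (Fin N → ℝ) := fun i j => if i = j then 1 else 0 with hg
  set Dsum : ℝ := ∑ j', ∑ i, |A (g j') i| with hDsum
  have hDsum0 : 0 ≤ Dsum :=
    Finset.sum_nonneg fun _ _ => Finset.sum_nonneg fun _ _ => abs_nonneg _
  set D : ℝ := 1 + Dsum with hD
  refine ⟨((N:ℝ) * D ^ q₂) ^ (1/q₂), fun c hc => ?_⟩
  obtain ⟨x, hx, rfl⟩ := hc
  have hxc : ∀ i, |x i| ≤ 1 := fun i => (abs_le_lpnorm hp₁ x i).trans hx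
  have hAx : ∀ i, |A x i| ≤ Dsum := by
    intro i
    have hxe : x = ∑ j', x j' • g j' := pi_eq_sum_univ x
    have hAxe : A x = ∑ j', x j' • A (g j') := by
      conv_lhs => rw [hxe]
      rw [map_sum]
      exact Finset.sum_congr rfl fun j' _ => A.map_smul _ _
    have h1 : A x i = ∑ j', x j' * A (g j') i := by
      rw [hAxe, Finset.sum_apply]
      exact Finset.sum_congr rfl fun j' _ => rfl
    rw [h1]
    calc |∑ j', x j' * A (g j') i| ≤ ∑ j', |x j' * A (g j') i| :=
          Finset.abs_sum_le_sum_abs _ _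
      _ ≤ ∑ j', |A (g j') i| := by
          refine Finset.sum_le_sum fun j' _ => ?_
          rw [abs_mul]
          exact mul_le_of_le_one_left (abs_nonneg _) (hxc j')
      _ ≤ Dsum := by
          refine Finset.sum_le_sum fun j' _ => ?_
          exact Finset.single_le_sum (f := fun i' => |A (g j') i'|)
            (fun i' _ => abs_nonneg _) (Finset.mem_univ i)
  have hcoord : ∀ i, |(x - A x) i| ≤ D := by
    intro i
    rw [Pi.sub_apply]
    calc |x i - A x i| ≤ |x i| + |A x i| := abs_sub _ _
      _ ≤ 1 + Dsum := add_le_add (hxc i) (hAx i)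
  have hD0 : 0 ≤ D := by rw [hD]; linarith
  unfold lpnorm
  rw [if_neg hp₂]
  refine Real.rpow_le_rpow (Finset.sum_nonneg fun i _ =>
    Real.rpow_nonneg (abs_nonneg _) _) ?_ (by positivity)
  calc ∑ i, |(x - A x) i| ^ q₂ ≤ ∑ _i : Fin N, D ^ q₂ :=
        Finset.sum_le_sum fun i _ =>
          Real.rpow_le_rpow (abs_nonneg _) (hcoord i) hq₂.le
    _ = (N:ℝ) * D ^ q₂ := by
        rw [Finset.sum_const, Finset.card_univ, Fintype.card_fin, nsmul_eq_mul]

open Finset in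
lemma lpnorm_restrict {N : ℕ} {p : ℝ≥0∞} (hp : p ≠ ∞) (hq : 0 < p.toReal)
    (j : ℕ) (x : Fin N → ℝ) :
    lpnorm p (fun i => if (i:ℕ) < j then 0 else x i)
      = (∑ i ∈ Finset.univ.filter (fun i : Fin N => ¬ (i:ℕ) < j),
          |x i| ^ p.toReal) ^ (1/p.toReal) := by
  classical
  unfold lpnorm
  rw [if_neg hp]
  congr 1
  rw [Finset.sum_filter]
  refine Finset.sum_congr rfl fun i _ => ?_
  by_cases h : (i:ℕ) < j
  · simp [h, Real.zero_rpow hq.ne']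
  · simp [h]

/-- If `0 < p₂ < p₁ ≤ ∞` and `1 ≤ k ≤ N`, then
`a_k(id : ℓ_{p₁}^N → ℓ_{p₂}^N) = (N - k + 1)^{1/p₂ - 1/p₁}` (with `1/∞ = 0`). -/
theorem approx_number_id_finite_lp_exact
    (p₁ p₂ : ℝ≥0∞) (h₀ : 0 < p₂) (h₁ : p₂ < p₁) (h₂ : p₁ ≤ ∞)
    (N k : ℕ) (hk : 1 ≤ k) (hkN : k ≤ N) :
    approxNumId p₁ p₂ N k = ((N - k + 1 : ℕ) : ℝ) ^ (1 / p₂.toReal - 1 / p₁.toReal) := by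
  classical
  have hp₂top : p₂ ≠ ∞ := (h₁.trans_le h₂).ne
  have hp₁pos : 0 < p₁ := h₀.trans h₁
  set q₂ := p₂.toReal with hq₂def
  have hq₂ : 0 < q₂ := ENNReal.toReal_pos h₀.ne' hp₂top
  set q₁ := p₁.toReal with hq₁def
  set m := N - k + 1 with hmdef
  have hm1 : 1 ≤ m := by omega
  have hmR : (1:ℝ) ≤ (m:ℝ) := by exact_mod_cast hm1
  have hmR0 : (0:ℝ) < (m:ℝ) := by linarith
  set j := k - 1 with hjdef
  have hjk : j < k := by omega
  have hjm : j + m = N := by omega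
  have hNpos : 0 < N := by omega
  haveI : NeZero N := ⟨hNpos.ne'⟩
  set e := 1/q₂ - 1/q₁ with hedef
  -- facts about exponents
  have hq₁top : p₁ = ∞ → q₁ = 0 := fun h => by simp [hq₁def, h]
  have hq₁fin : p₁ ≠ ∞ → q₂ < q₁ := fun h =>
    (ENNReal.toReal_lt_toReal hp₂top h).mpr h₁
  have he_pos : 0 < e := by
    by_cases h : p₁ = ∞
    · rw [hedef, hq₁top h, div_zero, sub_zero]
      positivity
    · have hq₁ : 0 < q₁ := hq₂.trans (hq₁fin h)
      rw [hedef]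
      exact sub_pos.mpr (one_div_lt_one_div_of_lt hq₂ (hq₁fin h))
  set c : ℝ := (m:ℝ) ^ e with hcdef
  have hc0 : 0 < c := Real.rpow_pos_of_pos hmR0 _
  set A := projKm N j with hA
  set sc : Finset (Fin N) := Finset.univ.filter (fun i => ¬ (i:ℕ) < j) with hscdef
  have hsc_card : sc.card = m := by
    have h2 : (Finset.univ.filter (fun i : Fin N => (i:ℕ) < j)).card = j := by
      have hjN : j < N := by omega
      have : Finset.univ.filter (fun i : Fin N => (i:ℕ) < j) = Finset.Iio (⟨j, hjN⟩ : Fin N) := by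
        ext i
        simp [Fin.lt_def]
      rw [this, Fin.card_Iio]
    rw [hscdef, Finset.filter_not, Finset.card_sdiff_of_subset (Finset.filter_subset _ _),
      Finset.card_univ, Fintype.card_fin, h2]
    omega
  -- the difference x - A x
  have hsub : ∀ x : Fin N → ℝ, x - A x = fun i : Fin N => if (i:ℕ) < j then 0 else x i := by
    intro x
    funext i
    by_cases h : (i:ℕ) < j <;> simp [hA, projKm, h]
  -- Upper bound for the projection
  have hub : ∀ x : Fin N → ℝ, lpnorm p₁ x ≤ 1 → lpnorm p₂ (x - A x) ≤ c := by
    intro x hx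
    rw [hsub x, lpnorm_restrict hp₂top hq₂ j x, ← hscdef]
    by_cases hp₁ : p₁ = ∞
    · have hxc : ∀ i, |x i| ≤ 1 := fun i => (abs_le_lpnorm hp₁pos x i).trans hx
      have hsum : ∑ i ∈ sc, |x i| ^ q₂ ≤ (m:ℝ) := by
        calc ∑ i ∈ sc, |x i| ^ q₂ ≤ ∑ _i ∈ sc, (1:ℝ) :=
              Finset.sum_le_sum fun i _ =>
                Real.rpow_le_one (abs_nonneg _) (hxc i) hq₂.le
          _ = (m:ℝ) := by rw [Finset.sum_const, hsc_card, nsmul_eq_mul, mul_one]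
      have : (∑ i ∈ sc, |x i| ^ q₂) ^ (1/q₂) ≤ (m:ℝ) ^ (1/q₂) :=
        Real.rpow_le_rpow (Finset.sum_nonneg fun i _ =>
          Real.rpow_nonneg (abs_nonneg _) _) hsum (by positivity)
      refine this.trans (le_of_eq ?_)
      rw [hcdef, hedef, hq₁top hp₁]
      norm_num
    · have hq₁ : 0 < q₁ := hq₂.trans (hq₁fin hp₁)
      have hx1 : lpnorm p₁ x = (∑ i, |x i| ^ q₁) ^ (1/q₁) := by
        unfold lpnorm
        rw [if_neg hp₁]
      have step1 := sum_rpow_card_bound sc (fun i => |x i|)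
        (fun i => abs_nonneg _) hq₂ (hq₁fin hp₁)
      rw [hsc_card] at step1
      have step2 : (∑ i ∈ sc, |x i| ^ q₁) ^ (1/q₁) ≤ 1 := by
        have hsub' : ∑ i ∈ sc, |x i| ^ q₁ ≤ ∑ i, |x i| ^ q₁ :=
          Finset.sum_le_sum_of_subset_of_nonneg (Finset.subset_univ sc)
            (fun i _ _ => Real.rpow_nonneg (abs_nonneg _) _)
        have := Real.rpow_le_rpow (Finset.sum_nonneg fun i _ =>
          Real.rpow_nonneg (abs_nonneg _) _) hsub' (by positivity : (0:ℝ) ≤ 1/q₁)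
        rw [← hx1] at this
        exact this.trans hx
      calc (∑ i ∈ sc, |x i| ^ q₂) ^ (1/q₂)
          ≤ (m:ℝ) ^ (1/q₂ - 1/q₁) * (∑ i ∈ sc, |x i| ^ q₁) ^ (1/q₁) := step1
        _ ≤ (m:ℝ) ^ (1/q₂ - 1/q₁) * 1 := by
            refine mul_le_mul_of_nonneg_left step2 (Real.rpow_nonneg hmR0.le _)
        _ = c := by rw [mul_one, hcdef, hedef]
  -- Witness attaining the value c
  have hwit : ∃ x₀ : Fin N → ℝ, lpnorm p₁ x₀ ≤ 1 ∧ lpnorm p₂ (x₀ - A x₀) = c := by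
    by_cases hp₁ : p₁ = ∞
    · refine ⟨(fun i : Fin N => if (i:ℕ) < j then 0 else 1), ?_, ?_⟩
      · unfold lpnorm
        rw [if_pos hp₁]
        refine ciSup_le fun i => ?_
        by_cases h : (i:ℕ) < j <;> simp [h]
      · rw [hsub, lpnorm_restrict hp₂top hq₂ j _, ← hscdef]
        have : ∀ i ∈ sc, |if (i:ℕ) < j then (0:ℝ) else 1| ^ q₂ = 1 := by
          intro i hi
          have h : ¬ (i:ℕ) < j := by simpa [hscdef] using hi
          simp [h]
        rw [Finset.sum_congr rfl this, Finset.sum_const, hsc_card, nsmul_eq_mul, mul_one,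
          hcdef, hedef, hq₁top hp₁]
        norm_num
        rfl
    · have hq₁ : 0 < q₁ := hq₂.trans (hq₁fin hp₁)
      set v : ℝ := (m:ℝ) ^ (-(1/q₁)) with hv
      have hv0 : 0 < v := Real.rpow_pos_of_pos hmR0 _
      refine ⟨(fun i : Fin N => if (i:ℕ) < j then 0 else v), ?_, ?_⟩
      · have h1 : lpnorm p₁ (fun i : Fin N => if (i:ℕ) < j then 0 else v)
            = (∑ i ∈ sc, |v| ^ q₁) ^ (1/q₁) := by
          rw [lpnorm_restrict hp₁ hq₁ j _, ← hscdef]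
        rw [h1, Finset.sum_const, hsc_card, nsmul_eq_mul, abs_of_pos hv0, hv,
          ← Real.rpow_mul hmR0.le, neg_mul, one_div_mul_cancel hq₁.ne',
          Real.rpow_neg_one, mul_inv_cancel₀ hmR0.ne',
          Real.one_rpow]
      · rw [hsub, lpnorm_restrict hp₂top hq₂ j _, ← hscdef]
        have : ∀ i ∈ sc, |if (i:ℕ) < j then (0:ℝ) else v| ^ q₂ = v ^ q₂ := by
          intro i hi
          have h : ¬ (i:ℕ) < j := by simpa [hscdef] using hi
          simp [h, abs_of_pos hv0]
        rw [Finset.sum_congr rfl this, Finset.sum_const, hsc_card, nsmul_eq_mul, hv,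
          ← Real.rpow_mul hmR0.le]
        rw [show (m:ℝ) * (m:ℝ) ^ (-(1/q₁) * q₂) = (m:ℝ) ^ (1 + (-(1/q₁) * q₂)) by
          rw [Real.rpow_add hmR0, Real.rpow_one]]
        rw [← Real.rpow_mul hmR0.le, hcdef, hedef]
        congr 1
        field_simp
        rw [← hq₂def]
        field_simp
        ring
  -- The lower bound: any admissible r is at least c
  have hlow : ∀ r ∈ {r : ℝ | ∃ A : (Fin N → ℝ) →ₗ[ℝ] (Fin N → ℝ),
      Module.rank ℝ (LinearMap.range A) < k ∧
      r = sSup {c : ℝ | ∃ x : Fin N → ℝ, lpnorm p₁ x ≤ 1 ∧ c = lpnorm p₂ (x - A x)}},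
      c ≤ r := by
    rintro r ⟨A', hrank, rfl⟩
    have hbdd := bddAbove_T hp₁pos hp₂top hq₂ A'
    -- the kernel has dimension at least m
    have hrk : Module.finrank ℝ (LinearMap.range A') < k := by
      have h2 : ((Module.finrank ℝ (LinearMap.range A') : Cardinal))
          = Module.rank ℝ (LinearMap.range A') := Module.finrank_eq_rank ℝ _
      have : ((Module.finrank ℝ (LinearMap.range A') : Cardinal)) < (k : Cardinal) :=
        h2 ▸ hrank
      exact_mod_cast this
    have hker : m ≤ Module.finrank ℝ (LinearMap.ker A') := by
      have h3 := LinearMap.finrank_range_add_finrank_ker A'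
      rw [Module.finrank_fintype_fun_eq_card, Fintype.card_fin] at h3
      omega
    obtain ⟨x, hxker, hx1, hxcard⟩ := exists_good_vector (LinearMap.ker A') hker
    set Sf := Finset.univ.filter (fun i => |x i| = 1) with hSf
    have hsum_ge : ∀ q : ℝ, 0 < q → (m:ℝ) ≤ ∑ i, |x i| ^ q := by
      intro q hq
      calc (m:ℝ) ≤ (Sf.card : ℝ) := by exact_mod_cast hxcard
        _ = ∑ _i ∈ Sf, (1:ℝ) := by rw [Finset.sum_const, nsmul_eq_mul, mul_one]
        _ = ∑ i ∈ Sf, |x i| ^ q := by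
            refine Finset.sum_congr rfl fun i hi => ?_
            have : |x i| = 1 := by simpa [hSf] using hi
            rw [this, Real.one_rpow]
        _ ≤ ∑ i, |x i| ^ q :=
            Finset.sum_le_sum_of_subset_of_nonneg (Finset.subset_univ Sf)
              (fun i _ _ => Real.rpow_nonneg (abs_nonneg _) _)
    by_cases hp₁ : p₁ = ∞
    · -- use x itself
      have hL : lpnorm p₁ x ≤ 1 := by
        unfold lpnorm
        rw [if_pos hp₁]
        exact ciSup_le hx1
      have hval : c ≤ lpnorm p₂ (x - A' x) := by
        have hker0 : A' x = 0 := LinearMap.mem_ker.mp hxker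
        rw [hker0, sub_zero]
        unfold lpnorm
        rw [if_neg hp₂top]
        have := Real.rpow_le_rpow hmR0.le (hsum_ge q₂ hq₂) (by positivity : (0:ℝ) ≤ 1/q₂)
        refine le_trans (le_of_eq ?_) this
        rw [hcdef, hedef, hq₁top hp₁]
        norm_num
      exact hval.trans (le_csSup hbdd ⟨x, hL, rfl⟩)
    · have hq₁ : 0 < q₁ := hq₂.trans (hq₁fin hp₁)
      set T₁ := ∑ i, |x i| ^ q₁ with hT₁
      set T₂ := ∑ i, |x i| ^ q₂ with hT₂
      have hT₁m : (m:ℝ) ≤ T₁ := hsum_ge q₁ hq₁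
      have hT₂m : (m:ℝ) ≤ T₂ := hsum_ge q₂ hq₂
      have hT₁pos : 0 < T₁ := lt_of_lt_of_le hmR0 hT₁m
      have hT₂pos : 0 < T₂ := lt_of_lt_of_le hmR0 hT₂m
      have hT12 : T₁ ≤ T₂ := by
        refine Finset.sum_le_sum fun i _ => ?_
        rcases eq_or_lt_of_le (abs_nonneg (x i)) with h | h
        · rw [← h, Real.zero_rpow hq₁.ne', Real.zero_rpow hq₂.ne']
        · exact Real.rpow_le_rpow_of_exponent_ge h (hx1 i) (hq₁fin hp₁).le
      set L := lpnorm p₁ x with hL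
      have hLval : L = T₁ ^ (1/q₁) := by
        rw [hL]; unfold lpnorm; rw [if_neg hp₁]
      have hLpos : 0 < L := by
        rw [hLval]; exact Real.rpow_pos_of_pos hT₁pos _
      set xh := L⁻¹ • x with hxh
      have hxh1 : lpnorm p₁ xh ≤ 1 := by
        rw [hxh, lpnorm_smul hp₁ hq₁ _ (by positivity), ← hL,
          inv_mul_cancel₀ hLpos.ne']
      have hxhker : xh ∈ LinearMap.ker A' := Submodule.smul_mem _ _ hxker
      have hxhval : lpnorm p₂ (xh - A' xh) = L⁻¹ * T₂ ^ (1/q₂) := by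
        have hker0 : A' xh = 0 := LinearMap.mem_ker.mp hxhker
        rw [hker0, sub_zero, hxh, lpnorm_smul hp₂top hq₂ _ (by positivity)]
        congr 1
        unfold lpnorm
        rw [if_neg hp₂top]
      have hmain : c ≤ L⁻¹ * T₂ ^ (1/q₂) := by
        rw [inv_mul_eq_div, le_div_iff₀ hLpos, hLval]
        calc c * T₁ ^ (1/q₁) = (m:ℝ) ^ e * T₁ ^ (1/q₁) := by rw [hcdef]
          _ ≤ T₂ ^ e * T₂ ^ (1/q₁) := by
              refine mul_le_mul (Real.rpow_le_rpow hmR0.le hT₂m he_pos.le)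
                (Real.rpow_le_rpow hT₁pos.le hT12 (by positivity))
                (Real.rpow_nonneg hT₁pos.le _) (Real.rpow_nonneg hT₂pos.le _)
          _ = T₂ ^ (e + 1/q₁) := by rw [← Real.rpow_add hT₂pos]
          _ = T₂ ^ (1/q₂) := by rw [hedef]; ring_nf
      exact le_trans (hmain.trans_eq hxhval.symm) (le_csSup hbdd ⟨xh, hxh1, rfl⟩)
  -- c is itself an admissible value
  have hcmem : c ∈ {r : ℝ | ∃ A : (Fin N → ℝ) →ₗ[ℝ] (Fin N → ℝ),
      Module.rank ℝ (LinearMap.range A) < k ∧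
      r = sSup {c : ℝ | ∃ x : Fin N → ℝ, lpnorm p₁ x ≤ 1 ∧ c = lpnorm p₂ (x - A x)}} := by
    refine ⟨A, projKm_rank_lt hjk, ?_⟩
    symm
    refine IsGreatest.csSup_eq ⟨?_, ?_⟩
    · obtain ⟨x₀, hx₀1, hx₀v⟩ := hwit
      exact ⟨x₀, hx₀1, hx₀v.symm⟩
    · rintro r ⟨x, hx, rfl⟩
      exact hub x hx
  have hfinal : approxNumId p₁ p₂ N k = c := by
    unfold approxNumId
    exact le_antisymm (csInf_le ⟨c, hlow⟩ hcmem) (le_csInf ⟨c, hcmem⟩ hlow)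
  rw [hfinal, hcdef, hedef, hmdef, hq₂def, hq₁def]
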